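/- Let H = {(x,y,z,t) ∈ ℝ⁴ : y²−x² = (x²+y²−2t²)², z = 0, |y| ≤ t ≤ 1}. Then H ∩ {x = 0} = {(0, y, 0, t) : 0 ≤ t ≤ 1 and |y| = (√(1+8t²) − 1)/2}. In particular H ∩ {x = 0} consists of two arcs y = ±g(t) with g(t) = (√(1+8t²) − 1)/2 = 2t² + O(t⁴), so the two branches of H are tangent at the origin. -/
import Mathlib


open Set Metric Filter Asymptotics

noncomputable section

/-- The surface `H` of Example 3 in `ℝ⁴` (coordinates `x = p 0`, `y = p 1`, `z = p 2`,
`t = p 3`): `y² - x² = (x² + y² - 2t²)²`, `z = 0`, `|y| ≤ t ≤ 1`. -/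
def SurfaceH : Set (EuclideanSpace ℝ (Fin 4)) :=
  {p | p 1 ^ 2 - p 0 ^ 2 = (p 0 ^ 2 + p 1 ^ 2 - 2 * p 3 ^ 2) ^ 2 ∧
        p 2 = 0 ∧ |p 1| ≤ p 3 ∧ p 3 ≤ 1}

/-- the slice of `H` by `{x = 0}` is the pair of arcs
`y = ±g(t)`, `0 ≤ t ≤ 1`, where `g(t) = (√(1+8t²) - 1)/2`; moreover
`g(t) = 2t² + O(t⁴)` as `t → 0⁺`, so the two branches of `H` are tangent at the origin. -/
theorem surfaceH_slice_x_eq_zero :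
    SurfaceH ∩ {p | p 0 = 0} =
      {p : EuclideanSpace ℝ (Fin 4) | p 0 = 0 ∧ p 2 = 0 ∧ 0 ≤ p 3 ∧ p 3 ≤ 1 ∧
        |p 1| = (Real.sqrt (1 + 8 * p 3 ^ 2) - 1) / 2} ∧
    (fun t : ℝ => (Real.sqrt (1 + 8 * t ^ 2) - 1) / 2 - 2 * t ^ 2)
      =O[nhdsWithin 0 (Set.Ioi (0 : ℝ))] (fun t : ℝ => t ^ 4) := by
  constructor
  · ext p
    simp only [SurfaceH, Set.mem_inter_iff, Set.mem_setOf_eq]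
    set y := p 1
    set t := p 3
    constructor
    · rintro ⟨⟨heq, hz, hy, ht1⟩, hx⟩
      have ht0 : 0 ≤ t := le_trans (abs_nonneg y) hy
      rw [hx] at heq
      have hy2 : y ^ 2 ≤ t ^ 2 := by
        have := sq_abs y
        nlinarith [hy, abs_nonneg y]
      have habs : |y| = 2 * t ^ 2 - y ^ 2 := by
        have h1 : |y| ^ 2 = (2 * t ^ 2 - y ^ 2) ^ 2 := by
          rw [sq_abs]; nlinarith [heq]
        have h2 : 0 ≤ 2 * t ^ 2 - y ^ 2 := by nlinarith
        nlinarith [abs_nonneg y, h1, h2]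
      have hsq : Real.sqrt (1 + 8 * t ^ 2) = 2 * |y| + 1 := by
        have : 1 + 8 * t ^ 2 = (2 * |y| + 1) ^ 2 := by
          have := sq_abs y; nlinarith
        rw [this, Real.sqrt_sq (by positivity)]
      refine ⟨hx, hz, ht0, ht1, ?_⟩
      rw [hsq]; ring
    · rintro ⟨hx, hz, ht0, ht1, habs⟩
      have hD : (0:ℝ) ≤ 1 + 8 * t ^ 2 := by positivity
      have hs : Real.sqrt (1 + 8 * t ^ 2) ^ 2 = 1 + 8 * t ^ 2 := Real.sq_sqrt hD
      have hs0 : 0 ≤ Real.sqrt (1 + 8 * t ^ 2) := Real.sqrt_nonneg _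
      have hysum : y ^ 2 + |y| = 2 * t ^ 2 := by
        have := sq_abs y
        nlinarith [habs, hs]
      refine ⟨⟨?_, hz, ?_, ht1⟩, hx⟩
      · rw [hx]
        have h2 : y ^ 2 - 2 * t ^ 2 = -|y| := by linarith
        have := sq_abs y
        nlinarith
      · -- |y| ≤ t : from √(1+8t²) ≤ 2t+1 since t ≤ 1
        have hle : Real.sqrt (1 + 8 * t ^ 2) ≤ 2 * t + 1 := by
          nlinarith [hs, hs0, ht0, ht1]
        rw [habs]; linarith
  · rw [Asymptotics.isBigO_iff]
    refine ⟨4, ?_⟩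
    filter_upwards [eventually_nhdsWithin_of_eventually_nhds
      (eventually_abs_sub_lt (0:ℝ) (by norm_num : (0:ℝ) < 1))] with t ht
    have ht1 : t ^ 2 ≤ 1 := by
      have : |t| < 1 := by simpa using ht
      nlinarith [sq_abs t, abs_nonneg t]
    have hD : (0:ℝ) ≤ 1 + 8 * t ^ 2 := by positivity
    have hs : Real.sqrt (1 + 8 * t ^ 2) ^ 2 = 1 + 8 * t ^ 2 := Real.sq_sqrt hD
    have hs1 : 1 ≤ Real.sqrt (1 + 8 * t ^ 2) := by
      nlinarith [Real.sqrt_nonneg (1 + 8 * t ^ 2)]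
    have hub : Real.sqrt (1 + 8 * t ^ 2) ≤ 1 + 4 * t ^ 2 := by
      nlinarith [Real.sqrt_nonneg (1 + 8 * t ^ 2)]
    have hlb : 1 + 4 * t ^ 2 - 8 * t ^ 4 ≤ Real.sqrt (1 + 8 * t ^ 2) := by
      nlinarith [Real.sqrt_nonneg (1 + 8 * t ^ 2), sq_nonneg (t ^ 2), sq_nonneg (t ^ 3)]
    rw [Real.norm_eq_abs, Real.norm_eq_abs, abs_le]
    constructor
    · have : 0 ≤ t ^ 4 := by positivity
      rw [abs_of_nonneg this]
      linarith
    · have h4 : |t ^ 4| = t ^ 4 := abs_of_nonneg (by positivity)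
      rw [h4]
      linarith
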